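/- If an estimator θ̂_n has zero excess expected message length (I₂(θ̂_n) = 0), then for any two distinct θ₁, θ₂ ∈ Θ with P(θ̂_n = θ₁) > 0 and P(θ̂_n = θ₂) > 0, the supports of P_{θ₁}^{(1:n)} and P_{θ₂}^{(1:n)} are disjoint; consequently the supports {supp(P_θ^{(1:n)}) : P(θ̂_n = θ) > 0} form a partition of supp(x_{1:n}). -/

import Mathlib

open MeasureTheory ProbabilityTheory Set
open scoped ENNReal

section Aux

private lemma tsum_fiber_ennreal {X Θ : Type*} (est : X → Θ) (h : X → ℝ≥0∞) :
    ∑' x, h x = ∑' θ : Θ, ∑' x : {x // est x = θ}, h x.val :=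
  calc ∑' x, h x
      = ∑' p : Σ θ : Θ, {x // est x = θ}, h p.2.val :=
        ((Equiv.sigmaFiberEquiv est).tsum_eq h).symm
    _ = ∑' θ : Θ, ∑' x : {x // est x = θ}, h x.val :=
        ENNReal.tsum_sigma fun θ (x : {x // est x = θ}) => h x.val

private lemma meas_fiber {α X : Type*} [MeasurableSpace α] [MeasurableSpace X]
    [Countable X] [DiscreteMeasurableSpace X]
    (ν : Measure α) {g : α → X} (hg : Measurable g) (S : Set X) :
    ∑' x : S, ν (g ⁻¹' {(x : X)}) = ν (g ⁻¹' S) :=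
  tsum_measure_preimage_singleton (Set.to_countable S)
    (fun y _ => hg (measurableSet_singleton y))

private lemma cond_le_one {α : Type*} [MeasurableSpace α] (μ : Measure α) [IsFiniteMeasure μ]
    {s : Set α} (hs : MeasurableSet s) (t : Set α) : μ[|s] t ≤ 1 := by
  rw [cond_apply hs]
  rcases eq_or_ne (μ s) 0 with h | h
  · rw [measure_mono_null Set.inter_subset_left h, mul_zero]
    exact zero_le_one
  · calc (μ s)⁻¹ * μ (s ∩ t) ≤ (μ s)⁻¹ * μ s :=
        mul_le_mul_right (measure_mono Set.inter_subset_left) _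
    _ = 1 := ENNReal.inv_mul_cancel h (measure_ne_top μ s)

variable {Θ : Type*} [Countable Θ] [MeasurableSpace Θ] [DiscreteMeasurableSpace Θ]
variable {X : Type*} [Countable X] [MeasurableSpace X] [DiscreteMeasurableSpace X]

private noncomputable def cndM (μ : Measure (Θ × X)) (θ : Θ) : Measure (Θ × X) :=
  μ[|Prod.fst ⁻¹' {θ}]

private noncomputable def pE (μ : Measure (Θ × X)) (x : X) : ℝ≥0∞ := μ (Prod.snd ⁻¹' {x})

private noncomputable def pR (μ : Measure (Θ × X)) (x : X) : ℝ := (pE μ x).toReal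

private noncomputable def qE (μ : Measure (Θ × X)) (est : X → Θ) (x : X) : ℝ≥0∞ :=
  cndM μ (est x) (Prod.snd ⁻¹' {x})

private noncomputable def qR (μ : Measure (Θ × X)) (est : X → Θ) (x : X) : ℝ :=
  (qE μ est x).toReal

private noncomputable def rE (μ : Measure (Θ × X)) (est : X → Θ) (θ : Θ) : ℝ≥0∞ :=
  μ {ω : Θ × X | est ω.2 = θ}

private noncomputable def rR (μ : Measure (Θ × X)) (est : X → Θ) (θ : Θ) : ℝ :=
  (rE μ est θ).toReal

private noncomputable def fR (μ : Measure (Θ × X)) (est : X → Θ) (x : X) : ℝ :=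
  pR μ x * Real.log (pR μ x / qR μ est x)

private lemma cover_aux (μ : Measure (Θ × X)) [IsProbabilityMeasure μ] (est : X → Θ)
    (Spos : ℝ≥0∞)
    (hSpos : Spos = ∑' x : X,
      if 0 < pR μ x ∧ qR μ est x = 0 then (⊤ : ℝ≥0∞) else ENNReal.ofReal (fR μ est x))
    (hfin : Spos ≠ ⊤) :
    ∀ x : X, 0 < pR μ x → 0 < qR μ est x := by
  intro x hp
  rcases eq_or_lt_of_le (ENNReal.toReal_nonneg : (0:ℝ) ≤ qR μ est x) with hq0 | hq
  · exfalso
    apply hfin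
    rw [hSpos, ← top_le_iff]
    have hle := ENNReal.le_tsum (f := fun x : X =>
      if 0 < pR μ x ∧ qR μ est x = 0 then (⊤ : ℝ≥0∞) else ENNReal.ofReal (fR μ est x)) x
    rwa [if_pos ⟨hp, hq0.symm⟩] at hle
  · exact hq

private lemma est_eq_of_pos
    (μ : Measure (Θ × X)) [IsProbabilityMeasure μ] (est : X → Θ)
    (Hpart : ℝ≥0∞)
    (hH : Hpart = ∑' θ : Θ, ENNReal.ofReal (Real.negMulLog (rR μ est θ)))
    (Spos Sneg : ℝ≥0∞)
    (hSpos : Spos = ∑' x : X,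
      if 0 < pR μ x ∧ qR μ est x = 0 then (⊤ : ℝ≥0∞) else ENNReal.ofReal (fR μ est x))
    (hSneg : Sneg = ∑' x : X, ENNReal.ofReal (-(fR μ est x)))
    (hfin : Sneg ≠ ⊤) (hzero : Hpart + Spos = Sneg) :
    ∀ (θ : Θ) (x : X), rE μ est θ ≠ 0 → cndM μ θ (Prod.snd ⁻¹' {x}) ≠ 0 → est x = θ := by
  classical
  have hest : Measurable est := Measurable.of_discrete
  have hsndmeas : Measurable (Prod.snd : Θ × X → X) := measurable_snd
  have hmeasF : ∀ θ : Θ, MeasurableSet (Prod.fst ⁻¹' {θ} : Set (Θ × X)) :=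
    fun θ => measurable_fst (measurableSet_singleton θ)
  have hcle : ∀ (θ : Θ) (t : Set (Θ × X)), cndM μ θ t ≤ 1 :=
    fun θ t => cond_le_one μ (hmeasF θ) t
  have hcne : ∀ (θ : Θ) (t : Set (Θ × X)), cndM μ θ t ≠ ⊤ :=
    fun θ t => ((hcle θ t).trans_lt ENNReal.one_lt_top).ne
  have hpne : ∀ x, pE μ x ≠ ⊤ := fun x => measure_ne_top μ _
  have hrne : ∀ θ, rE μ est θ ≠ ⊤ := fun θ => measure_ne_top μ _
  have hp_nonneg : ∀ x, (0:ℝ) ≤ pR μ x := fun x => ENNReal.toReal_nonneg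
  have hq_nonneg : ∀ x, (0:ℝ) ≤ qR μ est x := fun x => ENNReal.toReal_nonneg
  have hr_nonneg : ∀ θ, (0:ℝ) ≤ rR μ est θ := fun θ => ENNReal.toReal_nonneg
  have hr_le_one : ∀ θ, rR μ est θ ≤ 1 := by
    intro θ
    have h := ENNReal.toReal_mono (a := rE μ est θ) ENNReal.one_ne_top prob_le_one
    simpa [rR] using h
  have hlog_r_nonpos : ∀ θ, (0:ℝ) ≤ -Real.log (rR μ est θ) := by
    intro θ
    have := Real.log_nonpos (hr_nonneg θ) (hr_le_one θ)
    linarith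
  -- finiteness
  have hadd : Hpart + Spos ≠ ⊤ := by rw [hzero]; exact hfin
  have hHfin : Hpart ≠ ⊤ := (ENNReal.add_ne_top.mp hadd).1
  have hSposfin : Spos ≠ ⊤ := (ENNReal.add_ne_top.mp hadd).2
  have hkey : ∀ x, 0 < pR μ x → 0 < qR μ est x := cover_aux μ est Spos hSpos hSposfin
  have hSpos' : Spos = ∑' x, ENNReal.ofReal (fR μ est x) := by
    rw [hSpos]
    apply tsum_congr
    intro x
    rw [if_neg]
    rintro ⟨hp, hq⟩
    exact (hkey x hp).ne' hq
  -- summability of positive and negative parts of f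
  have hsum_fplus : Summable (fun x => max (fR μ est x) 0) := by
    have h := ENNReal.summable_toReal (f := fun x => ENNReal.ofReal (fR μ est x))
      (by rw [← hSpos']; exact hSposfin)
    exact h.congr fun x => by rw [ENNReal.toReal_ofReal']
  have hsum_fminus : Summable (fun x => max (-(fR μ est x)) 0) := by
    have h := ENNReal.summable_toReal (f := fun x => ENNReal.ofReal (-(fR μ est x)))
      (by rw [← hSneg]; exact hfin)
    exact h.congr fun x => by rw [ENNReal.toReal_ofReal']
  have hsum_f : Summable (fR μ est) := by
    have h := hsum_fplus.sub hsum_fminus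
    exact h.congr fun x => max_zero_sub_max_neg_zero_eq_self _
  have hSpos_toReal : Spos.toReal = ∑' x, max (fR μ est x) 0 := by
    rw [hSpos', ENNReal.tsum_toReal_eq (fun _ => ENNReal.ofReal_ne_top)]
    exact tsum_congr fun x => by rw [ENNReal.toReal_ofReal']
  have hSneg_toReal : Sneg.toReal = ∑' x, max (-(fR μ est x)) 0 := by
    rw [hSneg, ENNReal.tsum_toReal_eq (fun _ => ENNReal.ofReal_ne_top)]
    exact tsum_congr fun x => by rw [ENNReal.toReal_ofReal']
  have htsum_f : ∑' x, fR μ est x = Spos.toReal - Sneg.toReal := by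
    rw [hSpos_toReal, hSneg_toReal, ← Summable.tsum_sub hsum_fplus hsum_fminus]
    exact tsum_congr fun x => (max_zero_sub_max_neg_zero_eq_self _).symm
  -- fiber decomposition of r
  have hfiberE : ∀ θ, rE μ est θ = ∑' x : {x // est x = θ}, pE μ x.val := by
    intro θ
    exact (meas_fiber μ hsndmeas {x | est x = θ}).symm
  -- entropy rewritten as a sum over x
  have hE : Hpart = ∑' x, ENNReal.ofReal (pR μ x * (-Real.log (rR μ est (est x)))) := by
    rw [hH, tsum_fiber_ennreal est
      (fun x => ENNReal.ofReal (pR μ x * (-Real.log (rR μ est (est x)))))]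
    apply tsum_congr
    intro θ
    calc ENNReal.ofReal (Real.negMulLog (rR μ est θ))
        = ENNReal.ofReal (rR μ est θ) * ENNReal.ofReal (-Real.log (rR μ est θ)) := by
          rw [← ENNReal.ofReal_mul (hr_nonneg θ)]
          congr 1
          simp [Real.negMulLog]
      _ = (∑' x : {x // est x = θ}, pE μ x.val) * ENNReal.ofReal (-Real.log (rR μ est θ)) := by
          rw [show ENNReal.ofReal (rR μ est θ) = rE μ est θ from
            ENNReal.ofReal_toReal (hrne θ), hfiberE θ]
      _ = ∑' x : {x // est x = θ}, pE μ x.val * ENNReal.ofReal (-Real.log (rR μ est θ)) :=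
          ENNReal.tsum_mul_right.symm
      _ = ∑' x : {x // est x = θ},
            ENNReal.ofReal (pR μ x.val * (-Real.log (rR μ est (est x.val)))) := by
          apply tsum_congr
          intro x
          rw [x.prop, ENNReal.ofReal_mul (hp_nonneg x.val),
            show ENNReal.ofReal (pR μ x.val) = pE μ x.val from ENNReal.ofReal_toReal (hpne _)]
  have hh_nonneg : ∀ x, (0:ℝ) ≤ pR μ x * (-Real.log (rR μ est (est x))) :=
    fun x => mul_nonneg (hp_nonneg x) (hlog_r_nonpos _)
  have hsum_h : Summable (fun x => pR μ x * (-Real.log (rR μ est (est x)))) := by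
    have h := ENNReal.summable_toReal
      (f := fun x => ENNReal.ofReal (pR μ x * (-Real.log (rR μ est (est x)))))
      (by rw [← hE]; exact hHfin)
    exact h.congr fun x => ENNReal.toReal_ofReal (hh_nonneg x)
  have htsum_h : ∑' x, pR μ x * (-Real.log (rR μ est (est x))) = Hpart.toReal := by
    rw [hE, ENNReal.tsum_toReal_eq (fun _ => ENNReal.ofReal_ne_top)]
    exact (tsum_congr fun x => ENNReal.toReal_ofReal (hh_nonneg x)).symm
  have hreal : Hpart.toReal + Spos.toReal = Sneg.toReal := by
    rw [← ENNReal.toReal_add hHfin hSposfin, hzero]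
  -- p sums to one
  have hsum_P : ∑' x, pE μ x = 1 := by
    have h := meas_fiber μ hsndmeas (Set.univ : Set X)
    rw [Set.preimage_univ, measure_univ] at h
    rw [← tsum_univ (fun x => pE μ x)]
    exact h
  have hsum_p : Summable (pR μ) :=
    ENNReal.summable_toReal (by rw [hsum_P]; exact ENNReal.one_ne_top)
  have htsum_p : ∑' x, pR μ x = 1 := by
    have h1 := ENNReal.tsum_toReal_eq hpne
    rw [hsum_P] at h1
    simpa [pR] using h1.symm
  -- sum of r's is one
  have hsum_rE : ∑' θ, rE μ est θ = 1 := by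
    have h := meas_fiber μ (hest.comp hsndmeas) (Set.univ : Set Θ)
    rw [Set.preimage_univ, measure_univ] at h
    rw [← tsum_univ (fun θ => rE μ est θ)]
    exact h
  -- the Q quantity
  have hfiberC : ∀ θ, (∑' x : {x // est x = θ}, cndM μ θ (Prod.snd ⁻¹' {(x : X)}))
      = cndM μ θ (Prod.snd ⁻¹' {x | est x = θ}) :=
    fun θ => meas_fiber (cndM μ θ) hsndmeas {x | est x = θ}
  have hQ : ∑' x, ENNReal.ofReal (qR μ est x * rR μ est (est x))
      = ∑' θ, rE μ est θ * cndM μ θ (Prod.snd ⁻¹' {x | est x = θ}) := by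
    rw [tsum_fiber_ennreal est (fun x => ENNReal.ofReal (qR μ est x * rR μ est (est x)))]
    apply tsum_congr
    intro θ
    rw [← hfiberC θ, ← ENNReal.tsum_mul_left]
    apply tsum_congr
    intro x
    show ENNReal.ofReal ((cndM μ (est x.val) (Prod.snd ⁻¹' {(x.val : X)})).toReal
        * (rE μ est (est x.val)).toReal)
      = rE μ est θ * cndM μ θ (Prod.snd ⁻¹' {(x.val : X)})
    rw [x.prop, ENNReal.ofReal_mul ENNReal.toReal_nonneg,
      ENNReal.ofReal_toReal (hcne θ _), ENNReal.ofReal_toReal (hrne θ), mul_comm]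
  have hterm_le : ∀ θ, rE μ est θ * cndM μ θ (Prod.snd ⁻¹' {x | est x = θ}) ≤ rE μ est θ := by
    intro θ
    calc rE μ est θ * cndM μ θ (Prod.snd ⁻¹' {x | est x = θ})
        ≤ rE μ est θ * 1 := mul_le_mul_right (hcle θ _) _
      _ = rE μ est θ := mul_one _
  have hQ_le : (∑' θ, rE μ est θ * cndM μ θ (Prod.snd ⁻¹' {x | est x = θ})) ≤ 1 := by
    rw [← hsum_rE]
    exact ENNReal.tsum_le_tsum hterm_le
  have hQfin : (∑' θ, rE μ est θ * cndM μ θ (Prod.snd ⁻¹' {x | est x = θ})) ≠ ⊤ :=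
    (hQ_le.trans_lt ENNReal.one_lt_top).ne
  have hq'_nonneg : ∀ x, (0:ℝ) ≤ qR μ est x * rR μ est (est x) :=
    fun x => mul_nonneg (hq_nonneg x) (hr_nonneg _)
  have hsum_q' : Summable (fun x => qR μ est x * rR μ est (est x)) := by
    have h := ENNReal.summable_toReal
      (f := fun x => ENNReal.ofReal (qR μ est x * rR μ est (est x)))
      (by rw [hQ]; exact hQfin)
    exact h.congr fun x => ENNReal.toReal_ofReal (hq'_nonneg x)
  have htsum_q' : ∑' x, qR μ est x * rR μ est (est x)
      = (∑' θ, rE μ est θ * cndM μ θ (Prod.snd ⁻¹' {x | est x = θ})).toReal := by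
    rw [← hQ, ENNReal.tsum_toReal_eq (fun _ => ENNReal.ofReal_ne_top)]
    exact (tsum_congr fun x => ENNReal.toReal_ofReal (hq'_nonneg x)).symm
  -- pointwise Gibbs bound
  have hr_ge_p : ∀ x, pR μ x ≤ rR μ est (est x) := by
    intro x
    apply ENNReal.toReal_mono (hrne _)
    apply measure_mono
    intro ω hω
    simp only [Set.mem_preimage, Set.mem_singleton_iff] at hω
    show est ω.2 = est x
    rw [hω]
  have hg_bound : ∀ x, pR μ x - qR μ est x * rR μ est (est x)
      ≤ fR μ est x + pR μ x * (-Real.log (rR μ est (est x))) := by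
    intro x
    rcases eq_or_lt_of_le (hp_nonneg x) with hp0 | hp
    · have hf0 : fR μ est x = 0 := by
        show pR μ x * Real.log (pR μ x / qR μ est x) = 0
        rw [← hp0, zero_mul]
      rw [hf0, ← hp0, zero_mul, add_zero, zero_sub]
      linarith [hq'_nonneg x]
    · have hq := hkey x hp
      have hr : 0 < rR μ est (est x) := lt_of_lt_of_le hp (hr_ge_p x)
      have hq' : 0 < qR μ est x * rR μ est (est x) := mul_pos hq hr
      have hlog : Real.log ((qR μ est x * rR μ est (est x)) / pR μ x)
          ≤ (qR μ est x * rR μ est (est x)) / pR μ x - 1 :=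
        Real.log_le_sub_one_of_pos (div_pos hq' hp)
      have hlogeq : fR μ est x + pR μ x * (-Real.log (rR μ est (est x)))
          = -(pR μ x * Real.log ((qR μ est x * rR μ est (est x)) / pR μ x)) := by
        show pR μ x * Real.log (pR μ x / qR μ est x) + _ = _
        rw [Real.log_div hp.ne' hq.ne', Real.log_div hq'.ne' hp.ne',
          Real.log_mul hq.ne' hr.ne']
        ring
      rw [hlogeq]
      have h2 := mul_le_mul_of_nonneg_left hlog (hp_nonneg x)
      have hpd : pR μ x * ((qR μ est x * rR μ est (est x)) / pR μ x - 1)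
          = qR μ est x * rR μ est (est x) - pR μ x := by
        field_simp
      rw [hpd] at h2
      linarith
  have hsum_g : Summable (fun x => fR μ est x + pR μ x * (-Real.log (rR μ est (est x)))) :=
    hsum_f.add hsum_h
  have htsum_g : ∑' x, (fR μ est x + pR μ x * (-Real.log (rR μ est (est x)))) = 0 := by
    rw [Summable.tsum_add hsum_f hsum_h, htsum_f, htsum_h]
    linarith
  have hsum_pq : Summable (fun x => pR μ x - qR μ est x * rR μ est (est x)) :=
    hsum_p.sub hsum_q'
  have h1 : (1:ℝ) ≤ (∑' θ, rE μ est θ * cndM μ θ (Prod.snd ⁻¹' {x | est x = θ})).toReal := by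
    have h := Summable.tsum_le_tsum hg_bound hsum_pq hsum_g
    rw [htsum_g, Summable.tsum_sub hsum_p hsum_q', htsum_p, htsum_q'] at h
    linarith
  have hQ1 : (∑' θ, rE μ est θ * cndM μ θ (Prod.snd ⁻¹' {x | est x = θ})) = 1 := by
    refine le_antisymm hQ_le ?_
    calc (1:ℝ≥0∞) = ENNReal.ofReal 1 := by simp
      _ ≤ ENNReal.ofReal (∑' θ, rE μ est θ * cndM μ θ (Prod.snd ⁻¹' {x | est x = θ})).toReal :=
        ENNReal.ofReal_le_ofReal h1
      _ = _ := ENNReal.ofReal_toReal hQfin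
  -- termwise equality
  have hterm : ∀ θ, rE μ est θ * cndM μ θ (Prod.snd ⁻¹' {x | est x = θ}) = rE μ est θ := by
    intro θ
    by_contra hne
    have hlt : rE μ est θ * cndM μ θ (Prod.snd ⁻¹' {x | est x = θ}) < rE μ est θ :=
      lt_of_le_of_ne (hterm_le θ) hne
    have h := ENNReal.tsum_lt_tsum (i := θ)
      (by rw [hQ1]; exact ENNReal.one_ne_top) hterm_le hlt
    rw [hQ1, hsum_rE] at h
    exact lt_irrefl _ h
  -- conclusion
  intro θ x hrpos hcpos
  by_contra hne
  have h1' : cndM μ θ (Prod.snd ⁻¹' {x | est x = θ}) = 1 := by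
    have h := hterm θ
    nth_rewrite 2 [← mul_one (rE μ est θ)] at h
    exact (ENNReal.mul_right_inj hrpos (hrne θ)).mp h
  have hmeasA : MeasurableSet (Prod.snd ⁻¹' {x | est x = θ} : Set (Θ × X)) :=
    hsndmeas MeasurableSet.of_discrete
  have h2 : cndM μ θ Set.univ = 1 :=
    le_antisymm (hcle θ _) (h1' ▸ measure_mono (Set.subset_univ _))
  have hcompl : cndM μ θ ((Prod.snd ⁻¹' {x | est x = θ})ᶜ) = 0 := by
    have h := measure_compl hmeasA (hcne θ _)
    rw [h2, h1'] at h
    simpa using h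
  apply hcpos
  apply measure_mono_null _ hcompl
  intro ω hω
  simp only [Set.mem_preimage, Set.mem_singleton_iff] at hω
  simp only [Set.mem_compl_iff, Set.mem_preimage, Set.mem_setOf_eq]
  rw [hω]
  exact hne

end Aux

/-- If an estimator has zero excess expected message length (`I₂ = 0`, expressed via the
positive part `Spos`, negative part `Sneg` of the data sum and the entropy `Hpart` as
`Hpart + Spos = Sneg` with `Sneg` finite), then the supports of the model distributions
corresponding to two distinct estimates of positive probability are disjoint, and these
supports cover the support of the data distribution (hence form a partition of it). -/
theorem supports_partition_of_zero_excess_message_length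
    {Θ : Type*} [Countable Θ] [MeasurableSpace Θ] [DiscreteMeasurableSpace Θ]
    {X : Type*} [Countable X] [MeasurableSpace X] [DiscreteMeasurableSpace X]
    (μ : Measure (Θ × X)) [IsProbabilityMeasure μ]
    (est : X → Θ)
    (Hpart : ℝ≥0∞)
    (hH : Hpart = ∑' θ : Θ,
        ENNReal.ofReal (Real.negMulLog ((μ {ω : Θ × X | est ω.2 = θ}).toReal)))
    (Spos Sneg : ℝ≥0∞)
    (hSpos : Spos = ∑' x : X,
        if 0 < (μ (Prod.snd ⁻¹' {x})).toReal ∧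
            ((μ[|Prod.fst ⁻¹' {est x}]) (Prod.snd ⁻¹' {x})).toReal = 0
        then (⊤ : ℝ≥0∞)
        else ENNReal.ofReal ((μ (Prod.snd ⁻¹' {x})).toReal *
          Real.log ((μ (Prod.snd ⁻¹' {x})).toReal /
            ((μ[|Prod.fst ⁻¹' {est x}]) (Prod.snd ⁻¹' {x})).toReal)))
    (hSneg : Sneg = ∑' x : X,
        ENNReal.ofReal (-((μ (Prod.snd ⁻¹' {x})).toReal *
          Real.log ((μ (Prod.snd ⁻¹' {x})).toReal /
            ((μ[|Prod.fst ⁻¹' {est x}]) (Prod.snd ⁻¹' {x})).toReal))))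
    (hfin : Sneg ≠ ⊤)
    -- zero excess expected message length: I₂ = 0
    (hzero : Hpart + Spos = Sneg) :
    -- supports of distinct estimates of positive probability are disjoint
    (∀ θ₁ θ₂ : Θ, θ₁ ≠ θ₂ →
        0 < μ {ω : Θ × X | est ω.2 = θ₁} → 0 < μ {ω : Θ × X | est ω.2 = θ₂} →
        {x : X | 0 < (μ[|Prod.fst ⁻¹' {θ₁}]) (Prod.snd ⁻¹' {x})} ∩
          {x : X | 0 < (μ[|Prod.fst ⁻¹' {θ₂}]) (Prod.snd ⁻¹' {x})} = ∅) ∧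
    -- and they cover the support of the data distribution
    (∀ x : X, 0 < μ (Prod.snd ⁻¹' {x}) →
        ∃ θ : Θ, 0 < μ {ω : Θ × X | est ω.2 = θ} ∧
          0 < (μ[|Prod.fst ⁻¹' {θ}]) (Prod.snd ⁻¹' {x})) := by
  have hH' : Hpart = ∑' θ : Θ, ENNReal.ofReal (Real.negMulLog (rR μ est θ)) := hH
  have hSpos' : Spos = ∑' x : X,
      if 0 < pR μ x ∧ qR μ est x = 0 then (⊤ : ℝ≥0∞) else ENNReal.ofReal (fR μ est x) := hSpos
  have hSneg' : Sneg = ∑' x : X, ENNReal.ofReal (-(fR μ est x)) := hSneg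
  have hSposfin : Spos ≠ ⊤ := by
    have hadd : Hpart + Spos ≠ ⊤ := by rw [hzero]; exact hfin
    exact (ENNReal.add_ne_top.mp hadd).2
  have hmain := est_eq_of_pos μ est Hpart hH' Spos Sneg hSpos' hSneg' hfin hzero
  have hcover := cover_aux μ est Spos hSpos' hSposfin
  constructor
  · intro θ₁ θ₂ hne h1 h2
    ext x
    simp only [Set.mem_inter_iff, Set.mem_setOf_eq, Set.mem_empty_iff_false, iff_false]
    rintro ⟨hx1, hx2⟩
    have e1 : est x = θ₁ := hmain θ₁ x h1.ne' hx1.ne'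
    have e2 : est x = θ₂ := hmain θ₂ x h2.ne' hx2.ne'
    exact hne (e1 ▸ e2)
  · intro x hx
    refine ⟨est x, ?_, ?_⟩
    · exact lt_of_lt_of_le hx (measure_mono (by
        intro ω hω
        simp only [Set.mem_preimage, Set.mem_singleton_iff] at hω
        show est ω.2 = est x
        rw [hω]))
    · have hp : 0 < pR μ x :=
        ENNReal.toReal_pos hx.ne' (measure_ne_top μ _)
      have hq := hcover x hp
      rcases (ENNReal.toReal_pos_iff.mp hq) with ⟨hq1, _⟩
      exact hq1
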